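/- Let A be a complex M×N matrix, Y a complex M×L matrix, and μ > 0. If X̂ is a global minimizer of the multiple-snapshot objective G(X) = ‖Y − A X‖_F² + μ·Σᵢ ‖Xᵢ·‖₂, then the beamformed residual R = 2·Aᴴ(Y − A X̂) satisfies ‖Rᵢ·‖₂ ≤ μ for every row index i. -/

import Mathlib

open Matrix

/-- The multiple-snapshot (mixed-norm) LASSO objective ‖Y − A X‖_F² + μ Σᵢ ‖Xᵢ·‖₂. -/
noncomputable def msObj {M N L : ℕ} (A : Matrix (Fin M) (Fin N) ℂ)
    (Y : Matrix (Fin M) (Fin L) ℂ) (μ : ℝ) (X : Matrix (Fin N) (Fin L) ℂ) : ℝ :=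
  (∑ i, ∑ j, ‖(Y - A * X) i j‖ ^ 2) + μ * ∑ i, Real.sqrt (∑ j, ‖X i j‖ ^ 2)

/-- The beamformed residual matrix `R = 2 Aᴴ (Y − A X̂)`. -/
noncomputable def msRes {M N L : ℕ} (A : Matrix (Fin M) (Fin N) ℂ)
    (Y : Matrix (Fin M) (Fin L) ℂ) (Xhat : Matrix (Fin N) (Fin L) ℂ) :
    Matrix (Fin N) (Fin L) ℂ :=
  (2 : ℂ) • (Aᴴ * (Y - A * Xhat))

private lemma sqrt_sum_sq_add_le {L : ℕ} (a b : Fin L → ℂ) :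
    Real.sqrt (∑ j, ‖a j + b j‖ ^ 2) ≤
      Real.sqrt (∑ j, ‖a j‖ ^ 2) + Real.sqrt (∑ j, ‖b j‖ ^ 2) := by
  have h := norm_add_le (WithLp.toLp 2 a : EuclideanSpace ℂ (Fin L))
    (WithLp.toLp 2 b : EuclideanSpace ℂ (Fin L))
  simpa [EuclideanSpace.norm_eq] using h

/-- At a global multiple-snapshot LASSO minimizer, the Euclidean norm of every row of
the beamformed residual matrix is at most μ. -/
theorem ms_residual_bounded {M N L : ℕ} (A : Matrix (Fin M) (Fin N) ℂ)
    (Y : Matrix (Fin M) (Fin L) ℂ) (μ : ℝ) (hμ : 0 < μ) (Xhat : Matrix (Fin N) (Fin L) ℂ)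
    (hmin : ∀ X : Matrix (Fin N) (Fin L) ℂ, msObj A Y μ Xhat ≤ msObj A Y μ X) :
    ∀ i : Fin N, Real.sqrt (∑ j, ‖msRes A Y Xhat i j‖ ^ 2) ≤ μ := by
  intro i
  set E : Matrix (Fin M) (Fin L) ℂ := Y - A * Xhat with hE
  set R : Matrix (Fin N) (Fin L) ℂ := msRes A Y Xhat with hR
  -- the perturbation direction: row i equal to row i of R, zero elsewhere
  set V : Matrix (Fin N) (Fin L) ℂ := fun k j => if k = i then R i j else 0 with hV
  set W : Matrix (Fin M) (Fin L) ℂ := A * V with hW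
  set s : ℝ := ∑ j, ‖R i j‖ ^ 2 with hs
  set C : ℝ := ∑ m, ∑ j, ‖W m j‖ ^ 2 with hC
  have hnsq : ∀ z : ℂ, ‖z‖ ^ 2 = Complex.normSq z := fun z => by
    rw [Complex.sq_norm]
  have hs0 : 0 ≤ s := Finset.sum_nonneg fun j _ => by positivity
  have hC0 : 0 ≤ C := Finset.sum_nonneg fun m _ => Finset.sum_nonneg fun j _ => by positivity
  -- entries of W
  have hWmj : ∀ m j, W m j = A m i * R i j := by
    intro m j
    rw [hW, Matrix.mul_apply]
    simp [hV, Finset.sum_ite_eq', Finset.mem_univ]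
  -- key fact: (Aᴴ * E) i j = R i j / 2
  have hAE : ∀ j, (Aᴴ * E) i j = R i j / 2 := by
    intro j
    have : R i j = 2 * (Aᴴ * E) i j := by
      rw [hR, hE]
      simp [msRes, Matrix.smul_apply]
    rw [this]
    ring
  -- cross term identity
  have hcross : ∑ m, ∑ j, (E m j * (starRingEnd ℂ) (W m j)).re = s / 2 := by
    rw [Finset.sum_comm]
    have key : ∀ j : Fin L, ∑ m, (E m j * (starRingEnd ℂ) (W m j)).re
        = ‖R i j‖ ^ 2 / 2 := by
      intro j
      have hsum : ∑ m, E m j * (starRingEnd ℂ) (W m j)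
          = ((Aᴴ * E) i j) * (starRingEnd ℂ) (R i j) := by
        rw [Matrix.mul_apply, Finset.sum_mul]
        apply Finset.sum_congr rfl
        intro m _
        rw [hWmj, _root_.map_mul]
        simp [Matrix.conjTranspose_apply]
        ring
      rw [← Complex.re_sum, hsum, hAE]
      rw [div_mul_eq_mul_div, Complex.mul_conj]
      rw [show ((Complex.normSq (R i j) : ℂ) / 2) = ((Complex.normSq (R i j) / 2 : ℝ) : ℂ) by
        push_cast; ring]
      rw [Complex.ofReal_re, hnsq]
    rw [Finset.sum_congr rfl fun j _ => key j, ← Finset.sum_div, hs]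
  -- main inequality from minimality, for every t > 0
  have key : ∀ t : ℝ, 0 < t → s ≤ t * C + μ * Real.sqrt s := by
    intro t ht
    have h := hmin (Xhat + (t : ℂ) • V)
    -- data term expansion
    have hYA : Y - A * (Xhat + (t : ℂ) • V) = fun m j => E m j - (t : ℂ) * W m j := by
      funext m j
      simp [Matrix.mul_add, Matrix.mul_smul, hE, hW, Matrix.sub_apply, Matrix.add_apply,
        Matrix.smul_apply]
      ring
    have hdata : (∑ m, ∑ j, ‖(Y - A * (Xhat + (t : ℂ) • V)) m j‖ ^ 2)
        = (∑ m, ∑ j, ‖E m j‖ ^ 2) - t * s + t ^ 2 * C := by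
      have hentry : ∀ m j, ‖(Y - A * (Xhat + (t : ℂ) • V)) m j‖ ^ 2
          = ‖E m j‖ ^ 2 - 2 * t * (E m j * (starRingEnd ℂ) (W m j)).re
            + t ^ 2 * ‖W m j‖ ^ 2 := by
        intro m j
        rw [hYA]
        show ‖E m j - (t : ℂ) * W m j‖ ^ 2 = _
        simp only [hnsq]
        rw [Complex.normSq_sub]
        have h1 : Complex.normSq ((t : ℂ) * W m j) = t ^ 2 * Complex.normSq (W m j) := by
          rw [Complex.normSq_mul, Complex.normSq_ofReal]; ring
        have h2 : (E m j * (starRingEnd ℂ) ((t : ℂ) * W m j)).re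
            = t * (E m j * (starRingEnd ℂ) (W m j)).re := by
          rw [_root_.map_mul, Complex.conj_ofReal]
          rw [show E m j * ((t : ℂ) * (starRingEnd ℂ) (W m j))
            = (t : ℂ) * (E m j * (starRingEnd ℂ) (W m j)) by ring]
          exact Complex.re_ofReal_mul t _
        rw [h1, h2]
        ring
      rw [Finset.sum_congr rfl fun m _ => Finset.sum_congr rfl fun j _ => hentry m j]
      simp only [Finset.sum_add_distrib, Finset.sum_sub_distrib, ← Finset.mul_sum]
      rw [hcross]
      simp only [hC]
      ring
    -- penalty term bound
    have hpen : (∑ k, Real.sqrt (∑ j, ‖(Xhat + (t : ℂ) • V) k j‖ ^ 2))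
        ≤ (∑ k, Real.sqrt (∑ j, ‖Xhat k j‖ ^ 2)) + t * Real.sqrt s := by
      have hbound : ∀ k : Fin N, Real.sqrt (∑ j, ‖(Xhat + (t : ℂ) • V) k j‖ ^ 2)
          ≤ Real.sqrt (∑ j, ‖Xhat k j‖ ^ 2) + (if k = i then t * Real.sqrt s else 0) := by
        intro k
        by_cases hk : k = i
        · subst hk
          simp only [if_pos rfl]
          have htri := sqrt_sum_sq_add_le (fun j => Xhat k j) (fun j => (t : ℂ) * R k j)
          have h2 : Real.sqrt (∑ j, ‖(t : ℂ) * R k j‖ ^ 2) = t * Real.sqrt s := by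
            have hterm : ∀ j : Fin L, ‖(t : ℂ) * R k j‖ ^ 2 = t ^ 2 * ‖R k j‖ ^ 2 := by
              intro j
              rw [norm_mul, mul_pow, Complex.norm_real, Real.norm_eq_abs, sq_abs]
            rw [Finset.sum_congr rfl fun j _ => hterm j, ← Finset.mul_sum,
              Real.sqrt_mul (by positivity), Real.sqrt_sq ht.le]
          calc Real.sqrt (∑ j, ‖(Xhat + (t : ℂ) • V) k j‖ ^ 2)
              = Real.sqrt (∑ j, ‖Xhat k j + (t : ℂ) * R k j‖ ^ 2) := by
                apply congrArg
                apply Finset.sum_congr rfl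
                intro j _
                rw [Matrix.add_apply, Matrix.smul_apply]
                simp [hV]
            _ ≤ Real.sqrt (∑ j, ‖Xhat k j‖ ^ 2) + Real.sqrt (∑ j, ‖(t : ℂ) * R k j‖ ^ 2) :=
                htri
            _ = Real.sqrt (∑ j, ‖Xhat k j‖ ^ 2) + t * Real.sqrt s := by rw [h2]
        · simp only [if_neg hk, add_zero]
          apply le_of_eq
          apply congrArg
          apply Finset.sum_congr rfl
          intro j _
          rw [Matrix.add_apply, Matrix.smul_apply]
          simp [hV, hk]
      calc (∑ k, Real.sqrt (∑ j, ‖(Xhat + (t : ℂ) • V) k j‖ ^ 2))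
          ≤ ∑ k, (Real.sqrt (∑ j, ‖Xhat k j‖ ^ 2) + (if k = i then t * Real.sqrt s else 0)) :=
            Finset.sum_le_sum fun k _ => hbound k
        _ = (∑ k, Real.sqrt (∑ j, ‖Xhat k j‖ ^ 2)) + t * Real.sqrt s := by
            rw [Finset.sum_add_distrib, Finset.sum_ite_eq' Finset.univ i
              (fun _ => t * Real.sqrt s)]
            simp
    -- combine
    simp only [msObj] at h
    rw [← hE, hdata] at h
    have h5 := mul_le_mul_of_nonneg_left hpen hμ.le
    rw [mul_add] at h5
    have hts : t * s ≤ t ^ 2 * C + μ * (t * Real.sqrt s) := by linarith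
    have h6 : t * s ≤ t * (t * C + μ * Real.sqrt s) := by
      rw [show t * (t * C + μ * Real.sqrt s) = t ^ 2 * C + μ * (t * Real.sqrt s) by ring]
      exact hts
    exact le_of_mul_le_mul_left h6 ht
  -- take t → 0 : s ≤ μ √s
  have hlim : s ≤ μ * Real.sqrt s := by
    apply le_of_forall_pos_le_add
    intro ε hε
    have ht : (0 : ℝ) < ε / (C + 1) := div_pos hε (by linarith)
    have h := key (ε / (C + 1)) ht
    have hle : ε / (C + 1) * C ≤ ε := by
      rw [div_mul_eq_mul_div, div_le_iff₀ (by linarith)]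
      nlinarith
    linarith
  -- conclude √s ≤ μ
  rcases eq_or_lt_of_le (Real.sqrt_nonneg s) with h0 | h0
  · rw [← h0]; exact hμ.le
  · have hss : Real.sqrt s * Real.sqrt s = s := Real.mul_self_sqrt hs0
    have hfin : Real.sqrt s * Real.sqrt s ≤ μ * Real.sqrt s := by rw [hss]; exact hlim
    exact le_of_mul_le_mul_right hfin h0
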